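/- arXiv:1509.02319 — 2 statements merged into one kernel-verified Lean document; each statement's English description precedes it below -/
import Mathlib

section
/- Let (X₁,X₂) have joint distribution with copula C and continuous margins F₁, F₂, and suppose the partial derivative ∂C/∂u exists. Then ∂₁C(F₁(x₁), F₂(x₂)) equals the conditional distribution P(X₂ ≤ x₂ | X₁ = x₁) for almost every x₁ (with respect to the law of X₁). -/
open MeasureTheory ProbabilityTheory Set
open scoped ProbabilityTheory

open Filter
open scoped Topology ENNReal

lemma copulaAux_level (μ : Measure ℝ) [IsProbabilityMeasure μ] (F : ℝ → ℝ)
    (hF : ∀ x, F x = (μ (Iic x)).toReal) (hFc : Continuous F)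
    {u : ℝ} (hu0 : 0 ≤ u) (hu1 : u < 1) :
    μ {x | F x ≤ u} = ENNReal.ofReal u := by
  have hFcdf : F = ProbabilityTheory.cdf μ :=
    funext fun x => (hF x).trans (ProbabilityTheory.cdf_eq_real μ x).symm
  have hFmono : Monotone F := hFcdf ▸ ProbabilityTheory.monotone_cdf μ
  have hF0 : Tendsto F atBot (𝓝 0) := hFcdf ▸ ProbabilityTheory.tendsto_cdf_atBot μ
  have hF1 : Tendsto F atTop (𝓝 1) := hFcdf ▸ ProbabilityTheory.tendsto_cdf_atTop μ
  have hofReal : ∀ x, ENNReal.ofReal (F x) = μ (Iic x) := fun x => by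
    rw [hF]; exact ENNReal.ofReal_toReal (measure_ne_top μ _)
  set S : Set ℝ := {x | F x ≤ u} with hS
  rcases S.eq_empty_or_nonempty with hSe | hSne
  · have hu : u = 0 := by
      by_contra h
      have hu0' : 0 < u := lt_of_le_of_ne hu0 (Ne.symm h)
      obtain ⟨a, ha⟩ := (hF0.eventually_le_const hu0').exists
      have haS : a ∈ S := ha
      rw [hSe] at haS
      exact haS
    simp [hSe, hu]
  · -- S is nonempty, closed, bounded above
    have hScl : IsClosed S := isClosed_le hFc continuous_const
    obtain ⟨b, hb⟩ := (hF1.eventually_const_lt hu1).exists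
    have hBdd : BddAbove S := ⟨b, fun x hx => by
      by_contra h
      exact absurd (hFmono (le_of_lt (lt_of_not_ge h))) (by simp only [hS, mem_setOf_eq] at hx; linarith)⟩
    set s := sSup S with hs
    have hsS : s ∈ S := hScl.csSup_mem hSne hBdd
    have hSIic : S = Iic s := by
      apply Subset.antisymm (fun x hx => le_csSup hBdd hx)
      intro x hx
      exact le_trans (hFmono hx) hsS
    have hFs : F s = u := by
      refine le_antisymm hsS ?_
      have ht : Tendsto F (𝓝[>] s) (𝓝 (F s)) :=
        (hFc.tendsto s).mono_left nhdsWithin_le_nhds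
      refine ge_of_tendsto ht ?_
      filter_upwards [self_mem_nhdsWithin] with x hx
      by_contra h
      have hxS : x ∈ S := show F x ≤ u from le_of_lt (lt_of_not_ge h)
      rw [hSIic] at hxS
      exact absurd (mem_Iic.1 hxS) (not_le.2 hx)
    rw [hSIic, ← hofReal, hFs]

lemma copulaAux_level' (μ : Measure ℝ) [IsProbabilityMeasure μ] (F : ℝ → ℝ)
    (hF : ∀ x, F x = (μ (Iic x)).toReal) (hFc : Continuous F) (t : ℝ) :
    μ {x | F x ≤ F t} = ENNReal.ofReal (F t) := by
  have hFcdf : F = ProbabilityTheory.cdf μ :=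
    funext fun x => (hF x).trans (ProbabilityTheory.cdf_eq_real μ x).symm
  have hFmono : Monotone F := hFcdf ▸ ProbabilityTheory.monotone_cdf μ
  have h0 : 0 ≤ F t := hFcdf ▸ ProbabilityTheory.cdf_nonneg μ t
  have h1 : F t ≤ 1 := hFcdf ▸ ProbabilityTheory.cdf_le_one μ t
  rcases lt_or_eq_of_le h1 with h1' | h1'
  · exact copulaAux_level μ F hF hFc h0 h1'
  · have hset : {x | F x ≤ F t} = univ := by
      ext x
      simp only [mem_setOf_eq, mem_univ, iff_true, h1']
      exact hFcdf ▸ ProbabilityTheory.cdf_le_one μ x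
    rw [hset, measure_univ, h1', ENNReal.ofReal_one]

lemma copulaAux_map (μ : Measure ℝ) [IsProbabilityMeasure μ] (F : ℝ → ℝ)
    (hF : ∀ x, F x = (μ (Iic x)).toReal) (hFc : Continuous F) :
    μ.map F = (volume : Measure ℝ).restrict (Ioc 0 1) := by
  have hFcdf : F = ProbabilityTheory.cdf μ :=
    funext fun x => (hF x).trans (ProbabilityTheory.cdf_eq_real μ x).symm
  have h0 : ∀ x, 0 ≤ F x := fun x => hFcdf ▸ ProbabilityTheory.cdf_nonneg μ x
  have h1 : ∀ x, F x ≤ 1 := fun x => hFcdf ▸ ProbabilityTheory.cdf_le_one μ x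
  haveI : IsProbabilityMeasure (μ.map F) := Measure.isProbabilityMeasure_map hFc.measurable.aemeasurable
  refine Measure.ext_of_Iic _ _ (fun u => ?_)
  rw [Measure.map_apply hFc.measurable measurableSet_Iic,
    Measure.restrict_apply measurableSet_Iic]
  have hpre : F ⁻¹' Iic u = {x | F x ≤ u} := rfl
  rcases lt_or_ge u 0 with hu | hu
  · have h1 : F ⁻¹' Iic u = ∅ := by
      ext x; simp only [hpre, mem_setOf_eq, mem_empty_iff_false, iff_false, not_le]
      exact lt_of_lt_of_le hu (h0 x)
    have h2 : Iic u ∩ Ioc 0 1 = ∅ := by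
      ext x; simp only [mem_inter_iff, mem_Iic, mem_Ioc, mem_empty_iff_false, iff_false]
      rintro ⟨hx1, hx2, _⟩; linarith
    simp [h1, h2]
  · rcases lt_or_ge u 1 with hu1 | hu1
    · have h2 : Iic u ∩ Ioc 0 1 = Ioc 0 u := by
        ext x; simp only [mem_inter_iff, mem_Iic, mem_Ioc]
        constructor
        · rintro ⟨hx1, hx2, _⟩; exact ⟨hx2, hx1⟩
        · rintro ⟨hx1, hx2⟩; exact ⟨hx2, hx1, by linarith⟩
      rw [hpre, copulaAux_level μ F hF hFc hu hu1, h2, Real.volume_Ioc, sub_zero]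
    · have h1' : F ⁻¹' Iic u = univ := by
        ext x; simp only [hpre, mem_setOf_eq, mem_univ, iff_true]
        exact le_trans (h1 x) hu1
      have h2 : Iic u ∩ Ioc 0 1 = Ioc 0 1 := by
        ext x; simp only [mem_inter_iff, mem_Iic, mem_Ioc]
        constructor
        · rintro ⟨_, h⟩; exact h
        · rintro ⟨hx1, hx2⟩; exact ⟨by linarith, hx1, hx2⟩
      rw [h1', h2, measure_univ, Real.volume_Ioc, sub_zero, ENNReal.ofReal_one]

/-- The partial derivative ∂₁C(F₁(x₁), F₂(x₂)) of the copula of (X₁,X₂) equals the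
conditional distribution P(X₂ ≤ x₂ | X₁ = x₁), for a.e. x₁ with respect to the law
of X₁. -/
theorem copula_partial_deriv_eq_condDistrib {Ω : Type*} [MeasureSpace Ω]
    [IsProbabilityMeasure (ℙ : Measure Ω)]
    (X₁ X₂ : Ω → ℝ) (hX₁ : Measurable X₁) (hX₂ : Measurable X₂)
    (F₁ F₂ : ℝ → ℝ)
    (hF₁ : ∀ x, F₁ x = (ℙ {ω | X₁ ω ≤ x}).toReal)
    (hF₂ : ∀ x, F₂ x = (ℙ {ω | X₂ ω ≤ x}).toReal)
    (hF₁c : Continuous F₁) (hF₂c : Continuous F₂)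
    (C D : ℝ → ℝ → ℝ)
    (hSklar : ∀ x₁ x₂, (ℙ {ω | X₁ ω ≤ x₁ ∧ X₂ ω ≤ x₂}).toReal = C (F₁ x₁) (F₂ x₂))
    (hD : ∀ u v : ℝ, HasDerivAt (fun a => C a v) (D u v) u) :
    ∀ x₂ : ℝ, ∀ᵐ x₁ ∂((ℙ : Measure Ω).map X₁),
      D (F₁ x₁) (F₂ x₂) = (condDistrib X₂ X₁ ℙ x₁ (Iic x₂)).toReal := by
  intro x₂
  set μ : Measure ℝ := (ℙ : Measure Ω).map X₁ with hμ
  haveI : IsProbabilityMeasure μ := Measure.isProbabilityMeasure_map hX₁.aemeasurable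
  set v : ℝ := F₂ x₂ with hv
  -- F₁ is the cdf of μ
  have hμIic : ∀ x, μ (Iic x) = ℙ {ω | X₁ ω ≤ x} := fun x => by
    rw [hμ, Measure.map_apply hX₁ measurableSet_Iic]; rfl
  have hF : ∀ x, F₁ x = (μ (Iic x)).toReal := fun x => by rw [hμIic]; exact hF₁ x
  have hFcdf : F₁ = ProbabilityTheory.cdf μ :=
    funext fun x => (hF x).trans (ProbabilityTheory.cdf_eq_real μ x).symm
  have hFmono : Monotone F₁ := hFcdf ▸ ProbabilityTheory.monotone_cdf μ
  have h0 : ∀ x, 0 ≤ F₁ x := fun x => hFcdf ▸ ProbabilityTheory.cdf_nonneg μ x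
  have h1 : ∀ x, F₁ x ≤ 1 := fun x => hFcdf ▸ ProbabilityTheory.cdf_le_one μ x
  have hF0 : Filter.Tendsto F₁ Filter.atBot (𝓝 0) := hFcdf ▸ ProbabilityTheory.tendsto_cdf_atBot μ
  have hF1 : Filter.Tendsto F₁ Filter.atTop (𝓝 1) := hFcdf ▸ ProbabilityTheory.tendsto_cdf_atTop μ
  -- the joint measure of quadrants
  have hjm : ∀ t : ℝ, MeasurableSet {ω | X₁ ω ≤ t ∧ X₂ ω ≤ x₂} := fun t => by
    have : {ω | X₁ ω ≤ t ∧ X₂ ω ≤ x₂} = X₁ ⁻¹' Iic t ∩ X₂ ⁻¹' Iic x₂ := rfl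
    rw [this]
    exact (hX₁ measurableSet_Iic).inter (hX₂ measurableSet_Iic)
  -- C (·, v) is continuous
  have hCc : Continuous (fun u => C u v) :=
    continuous_iff_continuousAt.2 fun u => (hD u v).continuousAt
  -- surjectivity of F₁ onto (0,1)
  have hsurj : ∀ u ∈ Ioo (0:ℝ) 1, ∃ x, F₁ x = u := by
    intro u ⟨hu0, hu1⟩
    obtain ⟨a, ha⟩ := (hF0.eventually_lt_const hu0).exists
    obtain ⟨b, hb⟩ := (hF1.eventually_const_lt hu1).exists
    have hab : a ≤ b := by
      by_contra h
      exact absurd (hFmono (le_of_lt (lt_of_not_ge h))) (by linarith)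
    have := intermediate_value_Icc hab hF₁c.continuousOn
    obtain ⟨x, _, hx⟩ := this ⟨le_of_lt ha, le_of_lt hb⟩
    exact ⟨x, hx⟩
  -- monotonicity of C(·,v) on (0,1)
  have hCmono : ∀ u₁ ∈ Ioo (0:ℝ) 1, ∀ u₂ ∈ Ioo (0:ℝ) 1, u₁ ≤ u₂ → C u₁ v ≤ C u₂ v := by
    intro u₁ hu₁ u₂ hu₂ h12
    obtain ⟨a, ha⟩ := hsurj u₁ hu₁
    obtain ⟨b, hb⟩ := hsurj u₂ hu₂
    rcases eq_or_lt_of_le h12 with rfl | hlt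
    · exact le_refl _
    · have hab : a ≤ b := by
        by_contra h
        have := hFmono (le_of_lt (lt_of_not_ge h))
        rw [ha, hb] at this; linarith
      rw [← ha, ← hb, hv, ← hSklar, ← hSklar]
      refine ENNReal.toReal_mono (measure_ne_top _ _) (measure_mono ?_)
      intro ω ⟨hω1, hω2⟩
      exact ⟨le_trans hω1 hab, hω2⟩
  -- nonnegativity of D on (0,1)
  have hD0 : ∀ u ∈ Ioo (0:ℝ) 1, 0 ≤ D u v := by
    intro u hu
    have hslope : Filter.Tendsto (slope (fun a => C a v) u) (𝓝[>] u) (𝓝 (D u v)) :=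
      ((hasDerivAt_iff_tendsto_slope.1 (hD u v)).mono_left
        (nhdsWithin_mono u fun x hx => ne_of_gt hx))
    refine ge_of_tendsto hslope ?_
    filter_upwards [Ioo_mem_nhdsGT_of_mem ⟨le_refl u, hu.2⟩] with x hx
    have hx1 : x ∈ Ioo (0:ℝ) 1 := ⟨lt_trans hu.1 hx.1, hx.2⟩
    rw [slope_def_field]
    have hle := hCmono u hu x hx1 (le_of_lt hx.1)
    exact div_nonneg (sub_nonneg.2 hle) (by linarith [hx.1])
  -- C 0 v = 0
  have hC0 : C 0 v = 0 := by
    have hT1 : Filter.Tendsto (fun a => C (F₁ a) v) Filter.atBot (𝓝 (C 0 v)) :=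
      (hCc.tendsto 0).comp hF0
    have hT2 : Filter.Tendsto (fun a => C (F₁ a) v) Filter.atBot (𝓝 0) := by
      refine squeeze_zero (fun a => ?_) (fun a => ?_) hF0
      · rw [hv, ← hSklar]; exact ENNReal.toReal_nonneg
      · rw [hv, ← hSklar, hF₁]
        exact ENNReal.toReal_mono (measure_ne_top _ _) (measure_mono fun ω h => h.1)
    exact tendsto_nhds_unique hT1 hT2
  -- FTC: for 0 ≤ c ≤ 1, ∫ u in 0..c, D u v = C c v
  have hInt : ∀ c : ℝ, 0 ≤ c → c ≤ 1 → IntervalIntegrable (fun u => D u v) volume 0 c := by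
    intro c hc0 hc1
    refine intervalIntegral.intervalIntegrable_deriv_of_nonneg hCc.continuousOn (fun x _ => hD x v) ?_
    intro x hx
    rw [min_eq_left hc0, max_eq_right hc0] at hx
    exact hD0 x ⟨hx.1, lt_of_lt_of_le hx.2 hc1⟩
  have hFTC : ∀ c : ℝ, 0 ≤ c → c ≤ 1 → ∫ u in (0:ℝ)..c, D u v = C c v := by
    intro c hc0 hc1
    rw [intervalIntegral.integral_eq_sub_of_hasDerivAt (fun x _ => hD x v) (hInt c hc0 hc1), hC0,
      sub_zero]
  -- measurability of D(·,v)
  have hDm : Measurable (fun u => D u v) := by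
    have : (fun u => D u v) = deriv (fun a => C a v) := funext fun u => ((hD u v).deriv).symm
    rw [this]; exact measurable_deriv _
  set f : ℝ → ℝ≥0∞ := fun u => ENNReal.ofReal (D u v) with hfdef
  have hfm : Measurable f := hDm.ennreal_ofReal
  set g : ℝ → ℝ≥0∞ := fun x => f (F₁ x) with hgdef
  have hgm : Measurable g := hfm.comp hF₁c.measurable
  have hmap : μ.map F₁ = (volume : Measure ℝ).restrict (Ioc 0 1) := copulaAux_map μ F₁ hF hF₁c
  -- lintegral of f over Ioc 0 c
  have hIoc : ∀ c : ℝ, 0 ≤ c → c ≤ 1 → ∫⁻ u in Ioc 0 c, f u = ENNReal.ofReal (C c v) := by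
    intro c hc0 hc1
    have hint : IntegrableOn (fun u => D u v) (Ioc 0 c) volume := (hInt c hc0 hc1).1
    have hne : ∀ᵐ x ∂((volume : Measure ℝ).restrict (Ioc 0 c)), x ≠ c := by
      refine ae_restrict_of_ae ?_
      rw [ae_iff]
      simp only [ne_eq, not_not, setOf_eq_eq_singleton]
      exact Real.volume_singleton
    have hnn : 0 ≤ᵐ[(volume : Measure ℝ).restrict (Ioc 0 c)] fun u => D u v := by
      filter_upwards [ae_restrict_mem measurableSet_Ioc, hne] with x hx hxc
      exact hD0 x ⟨hx.1, lt_of_lt_of_le (lt_of_le_of_ne hx.2 hxc) hc1⟩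
    rw [hfdef, ← ofReal_integral_eq_lintegral_ofReal hint hnn,
      ← intervalIntegral.integral_of_le hc0, hFTC c hc0 hc1]
  -- finiteness of the density integral
  have hgint : ∫⁻ x, g x ∂μ ≠ ⊤ := by
    rw [hgdef, ← lintegral_map hfm hF₁c.measurable, hmap]
    rw [hIoc 1 zero_le_one le_rfl]
    exact ENNReal.ofReal_ne_top
  -- withDensity g on Iic t
  have hρ₁ : ∀ t, (μ.withDensity g) (Iic t) = ℙ {ω | X₁ ω ≤ t ∧ X₂ ω ≤ x₂} := by
    intro t
    rw [withDensity_apply _ measurableSet_Iic, ← lintegral_indicator measurableSet_Iic g]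
    -- swap indicators a.e.
    have hlev := copulaAux_level' μ F₁ hF hF₁c t
    have hIict : μ (Iic t) = ENNReal.ofReal (F₁ t) := by
      rw [hF t]; exact (ENNReal.ofReal_toReal (measure_ne_top μ _)).symm
    have hsub : Iic t ⊆ {x | F₁ x ≤ F₁ t} := fun x hx => hFmono hx
    have hBnull : μ {x | ¬ x ≤ t ∧ F₁ x ≤ F₁ t} = 0 := by
      have hd : μ ({x | F₁ x ≤ F₁ t} \ Iic t) = 0 := by
        rw [measure_diff hsub measurableSet_Iic.nullMeasurableSet (measure_ne_top μ _),
          hlev, hIict, tsub_self]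
      exact measure_mono_null (fun x hx => (mem_diff x).2 ⟨hx.2, hx.1⟩) hd
    have he : (Iic t).indicator g =ᵐ[μ] fun x => (Iic (F₁ t)).indicator f (F₁ x) := by
      filter_upwards [measure_eq_zero_iff_ae_notMem.mp hBnull] with x hx
      by_cases hxt : x ≤ t
      · rw [indicator_of_mem (mem_Iic.2 hxt), indicator_of_mem (mem_Iic.2 (hFmono hxt))]
      · have hxF : ¬ F₁ x ≤ F₁ t := fun h => hx ⟨hxt, h⟩
        rw [indicator_of_notMem (fun h => hxt (mem_Iic.1 h)),
          indicator_of_notMem (fun h => hxF (mem_Iic.1 h))]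
    rw [lintegral_congr_ae he, ← lintegral_map (hfm.indicator measurableSet_Iic) hF₁c.measurable,
      hmap, lintegral_indicator measurableSet_Iic f, Measure.restrict_restrict measurableSet_Iic]
    have hset : Iic (F₁ t) ∩ Ioc 0 1 = Ioc 0 (F₁ t) := by
      ext y
      simp only [mem_inter_iff, mem_Iic, mem_Ioc]
      constructor
      · rintro ⟨hy1, hy2, _⟩; exact ⟨hy2, hy1⟩
      · rintro ⟨hy1, hy2⟩; exact ⟨hy2, hy1, le_trans hy2 (h1 t)⟩
    rw [hset, hIoc (F₁ t) (h0 t) (h1 t), ← hSklar t x₂,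
      ENNReal.ofReal_toReal (measure_ne_top _ _)]
  -- withDensity of the conditional kernel on Iic t
  have hκm : Measurable (fun x => condDistrib X₂ X₁ ℙ x (Iic x₂)) :=
    Kernel.measurable_coe _ measurableSet_Iic
  have hρ₂ : ∀ t, (μ.withDensity (fun x => condDistrib X₂ X₁ ℙ x (Iic x₂))) (Iic t)
      = ℙ {ω | X₁ ω ≤ t ∧ X₂ ω ≤ x₂} := by
    intro t
    rw [withDensity_apply _ measurableSet_Iic, hμ,
      setLIntegral_map measurableSet_Iic hκm hX₁,
      setLIntegral_preimage_condDistrib hX₁ hX₂.aemeasurable measurableSet_Iic measurableSet_Iic]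
    rfl
  haveI : IsFiniteMeasure (μ.withDensity g) := isFiniteMeasure_withDensity hgint
  have hmeq : μ.withDensity g = μ.withDensity (fun x => condDistrib X₂ X₁ ℙ x (Iic x₂)) :=
    Measure.ext_of_Iic _ _ (fun t => by rw [hρ₁ t, hρ₂ t])
  have haeq : g =ᵐ[μ] fun x => condDistrib X₂ X₁ ℙ x (Iic x₂) :=
    (withDensity_eq_iff hgm.aemeasurable hκm.aemeasurable hgint).1 hmeq
  -- a.e. F₁ x ∈ (0,1)
  have h01 : ∀ᵐ x ∂μ, F₁ x ∈ Ioo (0:ℝ) 1 := by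
    have hz1 : μ (F₁ ⁻¹' Iic 0) = 0 := by
      rw [← Measure.map_apply hF₁c.measurable measurableSet_Iic, hmap,
        Measure.restrict_apply measurableSet_Iic]
      have : Iic (0:ℝ) ∩ Ioc 0 1 = ∅ := by
        ext y; simp only [mem_inter_iff, mem_Iic, mem_Ioc, mem_empty_iff_false, iff_false]
        rintro ⟨hy1, hy2, _⟩; linarith
      rw [this, measure_empty]
    have hz2 : μ (F₁ ⁻¹' Ici 1) = 0 := by
      rw [← Measure.map_apply hF₁c.measurable measurableSet_Ici, hmap,
        Measure.restrict_apply measurableSet_Ici]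
      have : Ici (1:ℝ) ∩ Ioc 0 1 = {1} := by
        ext y; simp only [mem_inter_iff, mem_Ici, mem_Ioc, mem_singleton_iff]
        constructor
        · rintro ⟨hy1, _, hy3⟩; linarith
        · rintro rfl; exact ⟨le_refl _, zero_lt_one, le_refl _⟩
      rw [this, Real.volume_singleton]
    rw [ae_iff]
    refine measure_mono_null (fun x hx => ?_) (measure_union_null hz1 hz2)
    simp only [mem_setOf_eq, mem_Ioo, not_and_or, not_lt] at hx
    rcases hx with hx | hx
    · exact Or.inl hx
    · exact Or.inr hx
  filter_upwards [haeq, h01] with x hx hx01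
  have hnn : 0 ≤ D (F₁ x) v := hD0 _ hx01
  rw [← hx, hgdef, hfdef]
  simp only [ENNReal.toReal_ofReal hnn]
end

section
/- Let (X_s, X_t) have copula C_{s,t}(u,v) = F_{s,t}(F_s^{-1}(u), F_t^{-1}(v)) with continuous strictly increasing margins F_s, F_t. Then as s ↑ t (assuming X_s → X_t in probability and F_s → F_t pointwise), C_{s,t}(u,v) converges to min(u,v), the Fréchet upper bound copula, for every (u,v) ∈ [0,1]². -/
open MeasureTheory Set Filter
open scoped ProbabilityTheory Topology

/-- As s ↑ t, assuming X_s → X_t in probability and pointwise convergence of the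
marginal distribution functions, the copula C_{s,t}(u,v) = F_{s,t}(F_s⁻¹(u), F_t⁻¹(v))
converges to the Fréchet upper bound min(u,v). -/
theorem copula_tendsto_frechet_upper {Ω : Type*} [MeasureSpace Ω]
    [IsProbabilityMeasure (ℙ : Measure Ω)]
    (X : ℝ → Ω → ℝ) (hX : ∀ s, Measurable (X s))
    (t : ℝ)
    (F : ℝ → ℝ → ℝ)
    (hF : ∀ s x, F s x = (ℙ {ω | X s ω ≤ x}).toReal)
    (hFc : ∀ s, Continuous (F s)) (hFm : ∀ s, StrictMono (F s))
    (Q : ℝ → ℝ → ℝ)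
    (hQ : ∀ s, ∀ u ∈ Ioo (0:ℝ) 1, F s (Q s u) = u)
    -- convergence in probability of X_s to X_t as s ↑ t:
    (hprob : ∀ ε : ℝ, 0 < ε →
      Tendsto (fun s => (ℙ {ω | ε ≤ |X s ω - X t ω|}).toReal) (𝓝[<] t) (𝓝 0))
    -- pointwise convergence of the distribution functions:
    (hFconv : ∀ x, Tendsto (fun s => F s x) (𝓝[<] t) (𝓝 (F t x))) :
    ∀ u ∈ Ioo (0:ℝ) 1, ∀ v ∈ Ioo (0:ℝ) 1,
      Tendsto (fun s => (ℙ {ω | X s ω ≤ Q s u ∧ X t ω ≤ Q t v}).toReal)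
        (𝓝[<] t) (𝓝 (min u v)) := by
  intro u hu v hv
  set a := Q t u with ha
  set b := Q t v with hb
  have hFa : F t a = u := hQ t u hu
  have hFb : F t b = v := hQ t v hv
  -- quantile convergence: Q s u → a along 𝓝[<] t
  have hQconv : Tendsto (fun s => Q s u) (𝓝[<] t) (𝓝 a) := by
    rw [Metric.tendsto_nhds]
    intro ε hε
    have h1 : F t (a - ε / 2) < u := hFa ▸ (hFm t) (by linarith)
    have h2 : u < F t (a + ε / 2) := hFa ▸ (hFm t) (by linarith)
    have e1 : ∀ᶠ s in 𝓝[<] t, F s (a - ε / 2) < u :=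
      (hFconv (a - ε / 2)).eventually_lt_const h1
    have e2 : ∀ᶠ s in 𝓝[<] t, u < F s (a + ε / 2) :=
      (hFconv (a + ε / 2)).eventually_const_lt h2
    filter_upwards [e1, e2] with s hs1 hs2
    have hl : a - ε / 2 < Q s u := by
      rw [← (hFm s).lt_iff_lt]
      rwa [hQ s u hu]
    have hr : Q s u < a + ε / 2 := by
      rw [← (hFm s).lt_iff_lt]
      rwa [hQ s u hu]
    rw [Real.dist_eq, abs_lt]
    constructor <;> linarith
  -- upper bound: the joint probability is at most min u v
  have hupper : ∀ s, (ℙ {ω | X s ω ≤ Q s u ∧ X t ω ≤ b}).toReal ≤ min u v := by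
    intro s
    refine le_min ?_ ?_
    · have h1 : {ω | X s ω ≤ Q s u ∧ X t ω ≤ b} ⊆ {ω | X s ω ≤ Q s u} :=
        fun ω hω => hω.1
      have := ENNReal.toReal_mono (measure_ne_top ℙ _) (measure_mono h1)
      rwa [← hF s (Q s u), hQ s u hu] at this
    · have h1 : {ω | X s ω ≤ Q s u ∧ X t ω ≤ b} ⊆ {ω | X t ω ≤ b} :=
        fun ω hω => hω.2
      have := ENNReal.toReal_mono (measure_ne_top ℙ _) (measure_mono h1)
      rwa [← hF t b, hFb] at this
  -- probability of a joint event for X t alone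
  have hjoint : ∀ c : ℝ, (ℙ {ω | X t ω ≤ c ∧ X t ω ≤ b}).toReal = min (F t c) v := by
    intro c
    have hset : {ω | X t ω ≤ c ∧ X t ω ≤ b} = {ω | X t ω ≤ min c b} := by
      ext ω; simp [le_min_iff]
    rw [hset, ← hF t (min c b), (hFm t).monotone.map_min, hFb]
  -- subadditivity in toReal form
  have hsub : ∀ (A B E : Set Ω), B ⊆ A ∪ E →
      (ℙ B).toReal ≤ (ℙ A).toReal + (ℙ E).toReal := by
    intro A B E hBE
    have h1 : ℙ B ≤ ℙ A + ℙ E := (measure_mono hBE).trans (measure_union_le A E)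
    rw [← ENNReal.toReal_add (measure_ne_top ℙ A) (measure_ne_top ℙ E)]
    exact ENNReal.toReal_mono (ENNReal.add_ne_top.2 ⟨measure_ne_top ℙ A, measure_ne_top ℙ E⟩) h1
  -- main convergence
  rw [Metric.tendsto_nhds]
  intro η hη
  have hη3 : 0 < η / 3 := by linarith
  -- continuity of F t at a: find ε > 0 with F t (a - 2ε) > u - η/3
  obtain ⟨δ, hδ, hδspec⟩ := Metric.continuous_iff.mp (hFc t) a (η / 3) hη3
  set ε := δ / 3 with hε
  have hεpos : 0 < ε := by positivity
  have hcont : u - η / 3 < F t (a - 2 * ε) := by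
    have h1 : dist (a - 2 * ε) a < δ := by
      rw [Real.dist_eq]
      rw [abs_lt]
      constructor <;> (simp only [hε]; linarith)
    have := hδspec (a - 2 * ε) h1
    rw [Real.dist_eq, hFa, abs_lt] at this
    linarith [this.1]
  -- eventual bounds
  have E1 : ∀ᶠ s in 𝓝[<] t, a - ε < Q s u := by
    have := Metric.tendsto_nhds.mp hQconv ε hεpos
    filter_upwards [this] with s hs
    rw [Real.dist_eq, abs_lt] at hs
    linarith [hs.1]
  have E2 : ∀ᶠ s in 𝓝[<] t,
      (ℙ {ω | ε ≤ |X s ω - X t ω|}).toReal < η / 3 :=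
    (hprob ε hεpos).eventually_lt_const hη3
  filter_upwards [E1, E2] with s h1 h2
  -- lower bound via set inclusion
  have hincl : {ω | X t ω ≤ Q s u - ε ∧ X t ω ≤ b} ⊆
      {ω | X s ω ≤ Q s u ∧ X t ω ≤ b} ∪ {ω | ε ≤ |X s ω - X t ω|} := by
    intro ω hω
    by_cases hc : ε ≤ |X s ω - X t ω|
    · exact Or.inr hc
    · left
      push_neg at hc
      rw [abs_lt] at hc
      exact ⟨by linarith [hω.1, hc.2], hω.2⟩
  have hlow := hsub _ _ _ hincl
  rw [hjoint (Q s u - ε)] at hlow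
  -- F t (Q s u - ε) > u - η/3
  have hF1 : u - η / 3 < F t (Q s u - ε) :=
    lt_of_lt_of_le hcont ((hFm t).monotone (by linarith))
  have hmin : min u v - η / 3 ≤ min (F t (Q s u - ε)) v := by
    rcases le_total u v with h | h
    · calc min u v - η / 3 = u - η / 3 := by rw [min_eq_left h]
        _ ≤ min (F t (Q s u - ε)) v := le_min (le_of_lt hF1) (by linarith)
    · calc min u v - η / 3 = v - η / 3 := by rw [min_eq_right h]
        _ ≤ min (F t (Q s u - ε)) v := le_min (by linarith) (by linarith)
  have hlower : min u v - 2 * (η / 3) <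
      (ℙ {ω | X s ω ≤ Q s u ∧ X t ω ≤ b}).toReal := by linarith
  rw [Real.dist_eq, abs_lt]
  constructor
  · linarith
  · linarith [hupper s]
end
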